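/- Let M be a connected graph with all vertex degrees bounded by K, viewed as a metric space with the path metric on vertices. Then for every finite vertex set S and r > 0, the r-boundary satisfies #∂_r S ≤ K^r · #∂S, where ∂S is the set of vertices of S adjacent to some vertex outside S. Consequently M is amenable as a metric space if and only if it is Følner as a graph. -/

import Mathlib

open Set Filter Topology

private lemma aux_geom {K : ℕ} (hK : 2 ≤ K) (r : ℕ) :
    ∑ i ∈ Finset.range r, K ^ i ≤ K ^ r := by
  induction r with
  | zero => simp
  | succ n ih =>
    rw [Finset.sum_range_succ, pow_succ]
    have h2 : K ^ n * 2 ≤ K ^ n * K := Nat.mul_le_mul_left _ hK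
    omega

private lemma aux_biUnion_ncard {α β : Type*} {T : Set α} (hT : T.Finite)
    {f : α → Set β} {m : ℕ} :
    (∀ a ∈ T, (f a).ncard ≤ m) → (⋃ a ∈ T, f a).ncard ≤ T.ncard * m := by
  refine Set.Finite.induction_on
    (motive := fun T _ => (∀ a ∈ T, (f a).ncard ≤ m) → (⋃ a ∈ T, f a).ncard ≤ T.ncard * m)
    T hT (by simp) ?_
  intro a T haT hTfin ih hm
  rw [Set.biUnion_insert]
  calc (f a ∪ ⋃ x ∈ T, f x).ncard ≤ (f a).ncard + (⋃ x ∈ T, f x).ncard :=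
        Set.ncard_union_le _ _
    _ ≤ m + T.ncard * m :=
        Nat.add_le_add (hm a (Set.mem_insert _ _))
          (ih fun b hb => hm b (Set.mem_insert_of_mem _ hb))
    _ = (insert a T).ncard * m := by
        rw [Set.ncard_insert_of_notMem haT hTfin, add_mul, one_mul, add_comm]

/-- Let `G` be a connected graph with all vertex degrees bounded by `K`, viewed
as a metric space via the path metric on vertices. For every finite vertex set
`S` and every `r > 0`, the `r`-boundary `∂_r S = {x ∈ S : ∃ y ∉ S, d(x,y) < r}`
satisfies `#∂_r S ≤ K^r · #∂S`, where `∂S` is the set of vertices of `S`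
adjacent to a vertex outside `S`. Consequently `G` is amenable as a metric
space iff it is Følner as a graph. -/
theorem bounded_degree_graph_amenable_iff_folner
    {V : Type*} (G : SimpleGraph V) (hconn : G.Connected)
    (K : ℕ) (hK : 0 < K)
    (hdeg : ∀ v : V, (G.neighborSet v).encard ≤ (K : ℕ∞)) :
    (∀ S : Set V, S.Finite → ∀ r : ℕ, 0 < r →
      {x ∈ S | ∃ y ∉ S, G.dist x y < r}.ncard ≤
        K ^ r * {x ∈ S | ∃ y ∉ S, G.Adj x y}.ncard) ∧
    ((∃ S : ℕ → Set V, (∀ n, (S n).Finite) ∧ (∀ n, (S n).Nonempty) ∧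
        ∀ r : ℕ, 0 < r → Tendsto
          (fun n => (({x ∈ S n | ∃ y ∉ S n, G.dist x y < r}).ncard : ℝ) /
            ((S n).ncard : ℝ)) atTop (𝓝 0)) ↔
     (∃ S : ℕ → Set V, (∀ n, (S n).Finite) ∧ (∀ n, (S n).Nonempty) ∧
        Tendsto
          (fun n => (({x ∈ S n | ∃ y ∉ S n, G.Adj x y}).ncard : ℝ) /
            ((S n).ncard : ℝ)) atTop (𝓝 0))) := by
  classical
  -- neighbor sets are finite with ncard ≤ K
  have hnbrfin : ∀ v : V, (G.neighborSet v).Finite :=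
    fun v => Set.finite_of_encard_le_coe (hdeg v)
  have hnbrcard : ∀ v : V, (G.neighborSet v).ncard ≤ K := by
    intro v
    obtain ⟨-, n₀, hn₀, hle⟩ := Set.encard_le_coe_iff.mp (hdeg v)
    rw [Set.ncard_def, hn₀, ENat.toNat_coe]
    exact hle
  -- spheres: finite, with card ≤ K ^ t
  have hsphere : ∀ (t : ℕ) (b : V),
      {x | G.dist b x = t}.Finite ∧ {x | G.dist b x = t}.ncard ≤ K ^ t := by
    intro t
    induction t with
    | zero =>
      intro b
      have hset : {x | G.dist b x = 0} = {b} := by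
        ext x
        simp [hconn.dist_eq_zero_iff, eq_comm]
      rw [hset]
      exact ⟨Set.finite_singleton b, by simp⟩
    | succ t ih =>
      intro b
      have hsub : {x | G.dist b x = t + 1} ⊆
          ⋃ z ∈ {x | G.dist b x = t}, G.neighborSet z := by
        intro x hx
        have hx' : G.dist x b = t + 1 := by rwa [SimpleGraph.dist_comm]
        obtain ⟨q, hq⟩ := hconn.exists_walk_length_eq_dist x b
        cases q with
        | nil => simp at hx'
        | @cons _ z _ h q' =>
          have hq'len : q'.length = t := by
            simp only [SimpleGraph.Walk.length_cons, hx'] at hq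
            omega
          have hle1 : G.dist z b ≤ t := hq'len ▸ SimpleGraph.dist_le q'
          have htri : G.dist x b ≤ G.dist x z + G.dist z b := hconn.dist_triangle
          have hxz : G.dist x z = 1 := SimpleGraph.dist_eq_one_iff_adj.mpr h
          have hzb : G.dist b z = t := by
            rw [SimpleGraph.dist_comm]
            omega
          exact Set.mem_biUnion hzb (h.symm : G.Adj z x)
      have hfin : (⋃ z ∈ {x | G.dist b x = t}, G.neighborSet z).Finite :=
        Set.Finite.biUnion (ih b).1 fun z _ => hnbrfin z
      refine ⟨hfin.subset hsub, ?_⟩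
      calc {x | G.dist b x = t + 1}.ncard
          ≤ (⋃ z ∈ {x | G.dist b x = t}, G.neighborSet z).ncard :=
            Set.ncard_le_ncard hsub hfin
        _ ≤ {x | G.dist b x = t}.ncard * K :=
            aux_biUnion_ncard (ih b).1 fun z _ => hnbrcard z
        _ ≤ K ^ t * K := Nat.mul_le_mul_right _ (ih b).2
        _ = K ^ (t + 1) := (pow_succ K t).symm
  -- balls: finite, with card ≤ ∑_{i<r} K^i
  have hball : ∀ (r : ℕ) (b : V),
      {x | G.dist b x < r}.Finite ∧
        {x | G.dist b x < r}.ncard ≤ ∑ i ∈ Finset.range r, K ^ i := by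
    intro r
    induction r with
    | zero => intro b; simp
    | succ r ih =>
      intro b
      have hset : {x | G.dist b x < r + 1} =
          {x | G.dist b x < r} ∪ {x | G.dist b x = r} := by
        ext x
        simp only [Set.mem_setOf_eq, Set.mem_union]
        omega
      rw [hset, Finset.sum_range_succ]
      refine ⟨(ih b).1.union (hsphere r b).1, ?_⟩
      calc ({x | G.dist b x < r} ∪ {x | G.dist b x = r}).ncard
          ≤ {x | G.dist b x < r}.ncard + {x | G.dist b x = r}.ncard :=
            Set.ncard_union_le _ _
        _ ≤ ∑ i ∈ Finset.range r, K ^ i + K ^ r :=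
            Nat.add_le_add (ih b).2 (hsphere r b).2
  -- the main combinatorial estimate
  have main : ∀ S : Set V, S.Finite → ∀ r : ℕ, 0 < r →
      {x ∈ S | ∃ y ∉ S, G.dist x y < r}.ncard ≤
        K ^ r * {x ∈ S | ∃ y ∉ S, G.Adj x y}.ncard := by
    intro S hS r hr
    set B := {x ∈ S | ∃ y ∉ S, G.Adj x y} with hB
    have hBfin : B.Finite := hS.subset (Set.sep_subset _ _)
    -- every point of the r-boundary is within distance < r of a point of B
    have key : ∀ {x y : V} (w : G.Walk x y), x ∈ S → y ∉ S →
        ∃ b ∈ B, G.dist b x < w.length := by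
      intro x y w
      induction w with
      | nil => intro hx hy; exact absurd hx hy
      | @cons x z y h p ih =>
        intro hx hy
        by_cases hz : z ∈ S
        · obtain ⟨b, hb, hblt⟩ := ih hz hy
          refine ⟨b, hb, ?_⟩
          have htri : G.dist b x ≤ G.dist b z + G.dist z x := hconn.dist_triangle
          have hzx : G.dist z x = 1 := SimpleGraph.dist_eq_one_iff_adj.mpr h.symm
          simp only [SimpleGraph.Walk.length_cons]
          omega
        · refine ⟨x, ⟨hx, z, hz, h⟩, ?_⟩
          simp [SimpleGraph.dist_self]
    have hsub : {x ∈ S | ∃ y ∉ S, G.dist x y < r} ⊆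
        ⋃ b ∈ B, {x | G.dist b x < r} := by
      rintro x ⟨hx, y, hy, hdist⟩
      obtain ⟨w, hw⟩ := hconn.exists_walk_length_eq_dist x y
      obtain ⟨b, hb, hblt⟩ := key w hx hy
      exact Set.mem_biUnion hb (by simp only [Set.mem_setOf_eq]; omega)
    rcases eq_or_lt_of_le (Nat.one_le_iff_ne_zero.mpr hK.ne') with hK1 | hK2
    · -- K = 1 : the whole graph has at most two vertices; boundary is all of ∂S
      have hdeg1 : ∀ v : V, (G.neighborSet v).encard ≤ 1 := by
        intro v; simpa [← hK1] using hdeg v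
      have hadj : ∀ {x y : V} (w : G.Walk x y), x = y ∨ G.Adj x y := by
        intro x y w
        induction w with
        | nil => exact Or.inl rfl
        | @cons x z y h p ih =>
          rcases ih with rfl | hzy
          · exact Or.inr h
          · left
            exact Set.encard_le_one_iff.mp (hdeg1 z) _ _
              (h.symm : x ∈ G.neighborSet z) (hzy : y ∈ G.neighborSet z)
      have hsub2 : {x ∈ S | ∃ y ∉ S, G.dist x y < r} ⊆ B := by
        rintro x ⟨hx, y, hy, -⟩
        rcases hadj (hconn x y).some with rfl | hxy
        · exact absurd hx hy
        · exact ⟨hx, y, hy, hxy⟩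
      calc {x ∈ S | ∃ y ∉ S, G.dist x y < r}.ncard ≤ B.ncard :=
            Set.ncard_le_ncard hsub2 hBfin
        _ ≤ K ^ r * B.ncard := Nat.le_mul_of_pos_left _ (pow_pos hK r)
    · -- K ≥ 2 : use the ball estimates
      have hK2' : 2 ≤ K := hK2
      have hfinU : (⋃ b ∈ B, {x | G.dist b x < r}).Finite :=
        Set.Finite.biUnion hBfin fun b _ => (hball r b).1
      calc {x ∈ S | ∃ y ∉ S, G.dist x y < r}.ncard
          ≤ (⋃ b ∈ B, {x | G.dist b x < r}).ncard := Set.ncard_le_ncard hsub hfinU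
        _ ≤ B.ncard * K ^ r :=
            aux_biUnion_ncard hBfin fun b _ => (hball r b).2.trans (aux_geom hK2' r)
        _ = K ^ r * B.ncard := Nat.mul_comm _ _
  refine ⟨main, ?_, ?_⟩
  · -- amenable → Følner
    rintro ⟨S, hfin, hne, h⟩
    refine ⟨S, hfin, hne, ?_⟩
    have hpos : ∀ n, (0 : ℝ) < ((S n).ncard : ℝ) := by
      intro n
      exact_mod_cast (Set.ncard_pos (hfin n)).mpr (hne n)
    refine squeeze_zero (fun n => by positivity) (fun n => ?_) (h 2 two_pos)
    apply div_le_div_of_nonneg_right _ (hpos n).le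
    · have hsub : {x ∈ S n | ∃ y ∉ S n, G.Adj x y} ⊆
          {x ∈ S n | ∃ y ∉ S n, G.dist x y < 2} := by
        rintro x ⟨hx, y, hy, hxy⟩
        have h1 : G.dist x y = 1 := SimpleGraph.dist_eq_one_iff_adj.mpr hxy
        exact ⟨hx, y, hy, by omega⟩
      exact_mod_cast Set.ncard_le_ncard hsub ((hfin n).subset (Set.sep_subset _ _))
  · -- Følner → amenable
    rintro ⟨S, hfin, hne, h⟩
    refine ⟨S, hfin, hne, fun r hr => ?_⟩
    have hpos : ∀ n, (0 : ℝ) < ((S n).ncard : ℝ) := by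
      intro n
      exact_mod_cast (Set.ncard_pos (hfin n)).mpr (hne n)
    have hlim : Tendsto (fun n => (K : ℝ) ^ r *
        ((({x ∈ S n | ∃ y ∉ S n, G.Adj x y}).ncard : ℝ) / ((S n).ncard : ℝ)))
        atTop (𝓝 0) := by
      simpa using h.const_mul ((K : ℝ) ^ r)
    refine squeeze_zero (fun n => by positivity) (fun n => ?_) hlim
    rw [mul_div_assoc']
    apply div_le_div_of_nonneg_right _ (hpos n).le
    have := main (S n) (hfin n) r hr
    exact_mod_cast this
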